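/- Norm transfer under change of variables: let a, ι, b > 0, ν > ι + b + a(r−1), and let dμ(t) = ∏_{j}|2 sinh t_j|^{2b}|2 sinh 2t_j|^{ι}·∏_{i<j}|2 sinh(t_i − t_j)|^a|2 sinh(t_i + t_j)|^a dt on ℝ^r. For any continuous symmetric function P on [−1,1]^r, ∫_{ℝ^r} (∏_j (cosh t_j)^{−2ν}·P(tanh t₁, …, tanh t_r))² dμ(t) = 2^{(2ι+2b+a(r−1))r} ∫_{[−1,1]^r} P(x)²·∏_{i<j}|x_i² − x_j²|^a·∏_j |x_j|^{2b+ι}·∏_j (1−x_j²)^{2ν − (1+ι+b+a(r−1))} dx. -/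

import Mathlib

open MeasureTheory Finset

section NormTransferAux

lemma my_sinh_eq_tanh_mul_cosh (x : ℝ) : Real.sinh x = Real.tanh x * Real.cosh x := by
  rw [Real.tanh_eq_sinh_div_cosh, div_mul_cancel₀]
  exact (Real.cosh_pos x).ne'

lemma my_abs_tanh_lt_one (x : ℝ) : |Real.tanh x| < 1 := by
  rw [Real.tanh_eq_sinh_div_cosh, abs_div, abs_of_pos (Real.cosh_pos x),
    div_lt_one (Real.cosh_pos x)]
  nlinarith [Real.cosh_sq x, abs_nonneg (Real.sinh x), sq_abs (Real.sinh x), Real.cosh_pos x]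

lemma my_one_sub_tanh_sq (x : ℝ) : 1 - Real.tanh x ^ 2 = 1 / Real.cosh x ^ 2 := by
  rw [Real.tanh_eq_sinh_div_cosh, div_pow]
  have h := (Real.cosh_pos x).ne'
  field_simp
  exact Real.cosh_sq_sub_sinh_sq x

lemma my_one_sub_tanh_sq' (x : ℝ) : 1 - Real.tanh x ^ 2 = Real.cosh x ^ (-2 : ℝ) := by
  rw [my_one_sub_tanh_sq, Real.rpow_neg (Real.cosh_pos x).le,
    show ((2:ℝ) = ((2:ℕ):ℝ)) by norm_num, Real.rpow_natCast, one_div]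

lemma my_tanh_strictMono : StrictMono Real.tanh := by
  intro u v huv
  have h1 := Real.cosh_pos u
  have h2 := Real.cosh_pos v
  have h3 : 0 < Real.sinh (v - u) := by
    rwa [Real.sinh_pos_iff, sub_pos]
  rw [Real.sinh_sub] at h3
  rw [Real.tanh_eq_sinh_div_cosh, Real.tanh_eq_sinh_div_cosh, div_lt_div_iff₀ h1 h2]
  nlinarith

lemma my_tanh_surj {y : ℝ} (h1 : -1 < y) (h2 : y < 1) : ∃ t : ℝ, Real.tanh t = y := by
  refine ⟨Real.log ((1 + y) / (1 - y)) / 2, ?_⟩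
  have hy1 : 0 < 1 + y := by linarith
  have hy2 : 0 < 1 - y := by linarith
  set t := Real.log ((1 + y) / (1 - y)) / 2 with ht
  have he : Real.exp (2 * t) = (1 + y) / (1 - y) := by
    rw [ht]; rw [mul_div_cancel₀ _ (two_ne_zero)]
    exact Real.exp_log (by positivity)
  have hept : 0 < Real.exp t := Real.exp_pos t
  have h2t : Real.exp t * Real.exp t = (1 + y) / (1 - y) := by
    rw [← Real.exp_add] at *
    rw [← he]; ring_nf
  rw [Real.tanh_eq_sinh_div_cosh, Real.sinh_eq, Real.cosh_eq, Real.exp_neg]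
  rw [div_eq_iff (by positivity)]
  field_simp at h2t ⊢
  nlinarith [h2t]

lemma my_range_tanh : Set.range Real.tanh = Set.Ioo (-1 : ℝ) 1 := by
  ext y
  constructor
  · rintro ⟨t, rfl⟩
    have := my_abs_tanh_lt_one t
    rw [abs_lt] at this
    exact ⟨this.1, this.2⟩
  · rintro ⟨h1, h2⟩
    exact my_tanh_surj h1 h2

lemma my_prod_pairs {r : ℕ} (f : Fin r → ℝ) :
    ∏ p ∈ Finset.univ.filter fun p : Fin r × Fin r => p.1 < p.2, (f p.1 * f p.2)
      = ∏ j, f j ^ (r - 1) := by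
  have h1 : ∏ p ∈ Finset.univ.filter fun p : Fin r × Fin r => p.1 < p.2, (f p.1 * f p.2)
      = ∏ p ∈ Finset.univ.filter fun p : Fin r × Fin r => p.1 ≠ p.2, f p.1 := by
    rw [Finset.prod_mul_distrib]
    have h2 : ∏ p ∈ Finset.univ.filter fun p : Fin r × Fin r => p.1 < p.2, f p.2
        = ∏ p ∈ Finset.univ.filter fun p : Fin r × Fin r => p.2 < p.1, f p.1 := by
      apply Finset.prod_nbij' (fun p => (p.2, p.1)) (fun p => (p.2, p.1)) <;>
        simp [Finset.mem_filter]
    rw [h2, ← Finset.prod_union]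
    · congr 1
      ext p
      simp only [Finset.mem_union, Finset.mem_filter, Finset.mem_univ, true_and]
      constructor
      · rintro (h | h) <;> [exact h.ne; exact h.ne']
      · intro h; exact lt_or_gt_of_ne h
    · rw [Finset.disjoint_left]
      intro p hp hq
      simp only [Finset.mem_filter] at hp hq
      exact absurd hq.2 (not_lt_of_gt hp.2)
  rw [h1, Finset.prod_filter, Fintype.prod_prod_type]
  refine Finset.prod_congr rfl (fun i _ => ?_)
  have h3 : (Finset.univ.filter fun j : Fin r => i ≠ j) = Finset.univ.erase i := by
    ext j
    simp only [Finset.mem_filter, Finset.mem_univ, true_and, Finset.mem_erase, and_true, ne_eq]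
    exact ne_comm
  calc ∏ j : Fin r, (if (i, j).1 ≠ (i, j).2 then f (i, j).1 else 1)
      = ∏ j ∈ Finset.univ.filter (fun j : Fin r => i ≠ j), f i := by
        rw [Finset.prod_filter]
    _ = f i ^ (r - 1) := by
        rw [h3, Finset.prod_const, Finset.card_erase_of_mem (Finset.mem_univ i),
          Finset.card_univ, Fintype.card_fin]

lemma my_det_pi {r : ℕ} (c : Fin r → ℝ) :
    (ContinuousLinearMap.pi fun j : Fin r =>
      c j • ContinuousLinearMap.proj (R := ℝ) (φ := fun _ : Fin r => ℝ) j).det = ∏ j, c j := by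
  have h : (ContinuousLinearMap.pi fun j : Fin r =>
      c j • ContinuousLinearMap.proj (R := ℝ) (φ := fun _ : Fin r => ℝ) j).toLinearMap
      = Matrix.toLin' (Matrix.diagonal c) := by
    apply LinearMap.ext
    intro v
    funext i
    simp [Matrix.toLin'_apply, Matrix.mulVec_diagonal]
  rw [ContinuousLinearMap.det, h, LinearMap.det_toLin', Matrix.det_diagonal]

lemma my_hasDerivAt_tanh (x : ℝ) : HasDerivAt Real.tanh (1 - Real.tanh x ^ 2) x := by
  have h := (Real.hasDerivAt_sinh x).div (Real.hasDerivAt_cosh x) (Real.cosh_pos x).ne'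
  have he : Real.tanh = fun y => Real.sinh y / Real.cosh y := by
    funext y; exact Real.tanh_eq_sinh_div_cosh y
  rw [my_one_sub_tanh_sq, he]
  refine h.congr_deriv ?_
  have h2 := Real.cosh_sq_sub_sinh_sq x
  have h3 := (Real.cosh_pos x).ne'
  rw [show Real.cosh x * Real.cosh x - Real.sinh x * Real.sinh x = 1 by nlinarith]

lemma my_hasFDerivAt {r : ℕ} (t : Fin r → ℝ) :
    HasFDerivAt (fun v : Fin r → ℝ => fun j => Real.tanh (v j))
      (ContinuousLinearMap.pi fun j : Fin r =>
        (1 - Real.tanh (t j) ^ 2) • ContinuousLinearMap.proj (R := ℝ) (φ := fun _ : Fin r => ℝ) j)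
      t := by
  rw [hasFDerivAt_pi']
  intro i
  have h1 : HasFDerivAt (fun v : Fin r → ℝ => Real.tanh (v i))
      ((1 - Real.tanh (t i) ^ 2) • ContinuousLinearMap.proj (R := ℝ) (φ := fun _ : Fin r => ℝ) i)
      t :=
    HasDerivAt.comp_hasFDerivAt (h₂ := Real.tanh) t (my_hasDerivAt_tanh (t i))
      (ContinuousLinearMap.proj (R := ℝ) (φ := fun _ : Fin r => ℝ) i).hasFDerivAt
  exact h1

lemma my_cov {r : ℕ} (g : (Fin r → ℝ) → ℝ) :
    ∫ x in Set.univ.pi fun _ : Fin r => Set.Icc (-1 : ℝ) 1, g x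
      = ∫ t : Fin r → ℝ, |∏ j, (1 - Real.tanh (t j) ^ 2)| * g (fun j => Real.tanh (t j)) := by
  have hae : (Set.univ.pi fun _ : Fin r => Set.Icc (-1 : ℝ) 1)
      =ᵐ[(volume : Measure (Fin r → ℝ))] Set.univ.pi fun _ : Fin r => Set.Ioo (-1 : ℝ) 1 := by
    rw [MeasureTheory.ae_eq_set]
    constructor
    · have hsub : (Set.univ.pi fun _ : Fin r => Set.Ioo (-1 : ℝ) 1)
          ⊆ Set.univ.pi fun _ : Fin r => Set.Icc (-1 : ℝ) 1 :=
        Set.pi_mono fun i _ => Set.Ioo_subset_Icc_self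
      rw [measure_diff hsub
        (MeasurableSet.univ_pi fun _ => measurableSet_Ioo).nullMeasurableSet]
      · rw [MeasureTheory.volume_pi_pi, MeasureTheory.volume_pi_pi]
        simp [Real.volume_Ioo, Real.volume_Icc]
      · rw [MeasureTheory.volume_pi_pi]
        simp [Real.volume_Ioo]
    · rw [Set.diff_eq_empty.mpr (Set.pi_mono fun i _ => Set.Ioo_subset_Icc_self)]
      simp
  rw [MeasureTheory.setIntegral_congr_set hae]
  have himg : (Set.univ.pi fun _ : Fin r => Set.Ioo (-1 : ℝ) 1)
      = (fun v : Fin r → ℝ => fun j => Real.tanh (v j)) '' Set.univ := by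
    rw [Set.image_univ]
    rw [show (fun v : Fin r → ℝ => fun j => Real.tanh (v j))
        = Pi.map (fun _ : Fin r => Real.tanh) from rfl, Set.range_piMap]
    simp [my_range_tanh]
  rw [himg]
  rw [MeasureTheory.integral_image_eq_integral_abs_det_fderiv_smul volume MeasurableSet.univ
    (fun x _ => (my_hasFDerivAt x).hasFDerivWithinAt)
    (fun x _ y _ h => by
      funext j
      exact my_tanh_strictMono.injective (congrFun h j)) g]
  rw [MeasureTheory.setIntegral_univ]
  congr 1
  funext t
  rw [my_det_pi, smul_eq_mul]

lemma my_pointwise {r : ℕ} (hr : 1 ≤ r) (a ι b ν : ℝ) (ha : 0 < a) (hι : 0 < ι) (hb : 0 < b)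
    (Q : ℝ) (t : Fin r → ℝ) :
    ((∏ j, Real.cosh (t j) ^ (-2 * ν)) * Q) ^ 2 *
          ((∏ j, |2 * Real.sinh (t j)| ^ (2 * b) * |2 * Real.sinh (2 * t j)| ^ ι) *
            ∏ p ∈ Finset.univ.filter fun p : Fin r × Fin r => p.1 < p.2,
              |2 * Real.sinh (t p.1 - t p.2)| ^ a * |2 * Real.sinh (t p.1 + t p.2)| ^ a)
      = 2 ^ ((2 * ι + 2 * b + a * ((r : ℝ) - 1)) * r) *
          (|∏ j, (1 - Real.tanh (t j) ^ 2)| *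
            (Q ^ 2 *
              ((∏ p ∈ Finset.univ.filter fun p : Fin r × Fin r => p.1 < p.2,
                  |Real.tanh (t p.1) ^ 2 - Real.tanh (t p.2) ^ 2| ^ a) *
                (∏ j, |Real.tanh (t j)| ^ (2 * b + ι)) *
                ∏ j, (1 - Real.tanh (t j) ^ 2) ^
                  (2 * ν - (1 + ι + b + a * ((r : ℝ) - 1)))))) := by
  have hc : ∀ j, 0 < Real.cosh (t j) := fun j => Real.cosh_pos (t j)
  have hrr : ((r - 1 : ℕ) : ℝ) = (r : ℝ) - 1 := by
    rw [Nat.cast_sub hr, Nat.cast_one]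
  -- Step A : per-j measure factor
  have hA : ∀ j, |2 * Real.sinh (t j)| ^ (2 * b) * |2 * Real.sinh (2 * t j)| ^ ι
      = ((2:ℝ) ^ (2 * b) * ((2:ℝ) ^ ι * (2:ℝ) ^ ι) *
        (Real.cosh (t j) ^ (2 * b) * (Real.cosh (t j) ^ ι * Real.cosh (t j) ^ ι))) * (|Real.tanh (t j)| ^ (2 * b) * |Real.tanh (t j)| ^ ι) := by
    intro j
    have e1 : |2 * Real.sinh (t j)| = 2 * Real.cosh (t j) * |Real.tanh (t j)| := by
      rw [my_sinh_eq_tanh_mul_cosh, abs_mul, abs_mul, abs_of_pos (hc j), abs_two]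
      ring
    have e2 : |2 * Real.sinh (2 * t j)| = 2 * 2 * (Real.cosh (t j) * Real.cosh (t j)) * |Real.tanh (t j)| := by
      rw [Real.sinh_two_mul, my_sinh_eq_tanh_mul_cosh,
        show (2:ℝ) * (2 * (Real.tanh (t j) * Real.cosh (t j)) * Real.cosh (t j))
          = (2 * 2 * (Real.cosh (t j) * Real.cosh (t j))) * Real.tanh (t j) by ring,
        abs_mul, abs_of_pos (by positivity : (0:ℝ) < 2 * 2 * (Real.cosh (t j) * Real.cosh (t j)))]
    rw [e1, e2]
    rw [Real.mul_rpow (by positivity) (abs_nonneg _),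
      Real.mul_rpow (by norm_num) (hc j).le,
      Real.mul_rpow (by positivity) (abs_nonneg _),
      Real.mul_rpow (by positivity) (by positivity),
      Real.mul_rpow (by norm_num) (by norm_num),
      Real.mul_rpow (hc j).le (hc j).le]
    ring
  -- Step B : pair factor
  have hB : ∀ p : Fin r × Fin r,
      |2 * Real.sinh (t p.1 - t p.2)| ^ a * |2 * Real.sinh (t p.1 + t p.2)| ^ a
      = (((2:ℝ) ^ a * (Real.cosh (t p.1) ^ a * Real.cosh (t p.1) ^ a)) * ((2:ℝ) ^ a * (Real.cosh (t p.2) ^ a * Real.cosh (t p.2) ^ a))) *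
        |Real.tanh (t p.1) ^ 2 - Real.tanh (t p.2) ^ 2| ^ a := by
    rintro ⟨i, j⟩
    have e1 : |2 * Real.sinh (t i - t j)| = 2 * (Real.cosh (t i) * Real.cosh (t j)) * |Real.tanh (t i) - Real.tanh (t j)| := by
      rw [Real.sinh_sub, my_sinh_eq_tanh_mul_cosh, my_sinh_eq_tanh_mul_cosh,
        show Real.tanh (t i) * Real.cosh (t i) * Real.cosh (t j) -
            Real.cosh (t i) * (Real.tanh (t j) * Real.cosh (t j))
          = (Real.cosh (t i) * Real.cosh (t j)) * (Real.tanh (t i) - Real.tanh (t j)) by ring,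
        abs_mul, abs_mul, abs_of_pos (mul_pos (hc i) (hc j)), abs_two]
      ring
    have e2 : |2 * Real.sinh (t i + t j)| = 2 * (Real.cosh (t i) * Real.cosh (t j)) * |Real.tanh (t i) + Real.tanh (t j)| := by
      rw [Real.sinh_add, my_sinh_eq_tanh_mul_cosh, my_sinh_eq_tanh_mul_cosh,
        show Real.tanh (t i) * Real.cosh (t i) * Real.cosh (t j) +
            Real.cosh (t i) * (Real.tanh (t j) * Real.cosh (t j))
          = (Real.cosh (t i) * Real.cosh (t j)) * (Real.tanh (t i) + Real.tanh (t j)) by ring,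
        abs_mul, abs_mul, abs_of_pos (mul_pos (hc i) (hc j)), abs_two]
      ring
    have e3 : |Real.tanh (t i) - Real.tanh (t j)| ^ a * |Real.tanh (t i) + Real.tanh (t j)| ^ a = |Real.tanh (t i) ^ 2 - Real.tanh (t j) ^ 2| ^ a := by
      rw [← Real.mul_rpow (abs_nonneg _) (abs_nonneg _), ← abs_mul]
      congr 2
      ring
    rw [e1, e2]
    rw [Real.mul_rpow (by positivity) (abs_nonneg _),
      Real.mul_rpow (by norm_num) (mul_pos (hc i) (hc j)).le,
      Real.mul_rpow (hc i).le (hc j).le,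
      Real.mul_rpow (by positivity) (abs_nonneg _),
      Real.mul_rpow (by norm_num) (mul_pos (hc i) (hc j)).le,
      Real.mul_rpow (hc i).le (hc j).le]
    rw [show (2:ℝ) ^ a * (Real.cosh (t i) ^ a * Real.cosh (t j) ^ a) * |Real.tanh (t i) - Real.tanh (t j)| ^ a *
        ((2:ℝ) ^ a * (Real.cosh (t i) ^ a * Real.cosh (t j) ^ a) * |Real.tanh (t i) + Real.tanh (t j)| ^ a)
      = (((2:ℝ) ^ a * (Real.cosh (t i) ^ a * Real.cosh (t i) ^ a)) * ((2:ℝ) ^ a * (Real.cosh (t j) ^ a * Real.cosh (t j) ^ a))) *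
        (|Real.tanh (t i) - Real.tanh (t j)| ^ a * |Real.tanh (t i) + Real.tanh (t j)| ^ a) by ring, e3]
  -- pair product
  have hBprod : (∏ p ∈ Finset.univ.filter fun p : Fin r × Fin r => p.1 < p.2,
        |2 * Real.sinh (t p.1 - t p.2)| ^ a * |2 * Real.sinh (t p.1 + t p.2)| ^ a)
      = (∏ j, ((2:ℝ) ^ a * (Real.cosh (t j) ^ a * Real.cosh (t j) ^ a)) ^ (r - 1)) *
        ∏ p ∈ Finset.univ.filter fun p : Fin r × Fin r => p.1 < p.2,
          |Real.tanh (t p.1) ^ 2 - Real.tanh (t p.2) ^ 2| ^ a := by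
    rw [Finset.prod_congr rfl (fun p _ => hB p), Finset.prod_mul_distrib,
      my_prod_pairs (fun j => (2:ℝ) ^ a * (Real.cosh (t j) ^ a * Real.cosh (t j) ^ a))]
  have hpos : ∀ j, (0:ℝ) < 1 - Real.tanh (t j) ^ 2 := by
    intro j
    have h := my_abs_tanh_lt_one (t j)
    nlinarith [abs_nonneg (Real.tanh (t j)), sq_abs (Real.tanh (t j))]
  have h1x : ∀ j, 1 - Real.tanh (t j) ^ 2 = Real.cosh (t j) ^ (-2 : ℝ) := fun j => my_one_sub_tanh_sq' (t j)
  have h2x : ∀ j, (1 - Real.tanh (t j) ^ 2) ^ (2 * ν - (1 + ι + b + a * ((r : ℝ) - 1)))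
      = Real.cosh (t j) ^ ((-2 : ℝ) * (2 * ν - (1 + ι + b + a * ((r : ℝ) - 1)))) := by
    intro j
    rw [h1x j, ← Real.rpow_mul (hc j).le]
  have h3x : ∀ j, |Real.tanh (t j)| ^ (2 * b + ι) = |Real.tanh (t j)| ^ (2 * b) * |Real.tanh (t j)| ^ ι := fun j =>
    Real.rpow_add' (abs_nonneg _) (by positivity : (0:ℝ) < 2 * b + ι).ne'
  have hK : (2:ℝ) ^ ((2 * ι + 2 * b + a * ((r : ℝ) - 1)) * r)
      = ∏ _j : Fin r, (2:ℝ) ^ (2 * ι + 2 * b + a * ((r : ℝ) - 1)) := by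
    rw [Finset.prod_const, Finset.card_univ, Fintype.card_fin,
      ← Real.rpow_natCast ((2:ℝ) ^ (2 * ι + 2 * b + a * ((r : ℝ) - 1))) r,
      ← Real.rpow_mul (by norm_num : (0:ℝ) ≤ 2)]
  have hsplit : ∀ (F1 F2 F3 : Fin r → ℝ),
      (∏ j, F1 j) * (∏ j, F2 j) * (∏ j, F3 j) = ∏ j, F1 j * F2 j * F3 j := by
    intro F1 F2 F3
    rw [Finset.prod_mul_distrib, Finset.prod_mul_distrib]
  -- rewrite both sides
  rw [mul_pow, ← Finset.prod_pow, Finset.prod_congr rfl (fun j _ => hA j), hBprod,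
    Finset.prod_mul_distrib, abs_of_pos (Finset.prod_pos (fun j _ => hpos j)),
    Finset.prod_congr rfl (fun j _ => h1x j), Finset.prod_congr rfl (fun j _ => h2x j),
    Finset.prod_congr rfl (fun j _ => h3x j), hK]
  -- reduce to a per-j scalar identity
  have key : ∀ j : Fin r,
      (Real.cosh (t j) ^ (-2 * ν)) ^ 2 *
        ((2:ℝ) ^ (2 * b) * ((2:ℝ) ^ ι * (2:ℝ) ^ ι) * (Real.cosh (t j) ^ (2 * b) * (Real.cosh (t j) ^ ι * Real.cosh (t j) ^ ι))) *
        ((2:ℝ) ^ a * (Real.cosh (t j) ^ a * Real.cosh (t j) ^ a)) ^ (r - 1)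
      = (2:ℝ) ^ (2 * ι + 2 * b + a * ((r : ℝ) - 1)) * Real.cosh (t j) ^ (-2 : ℝ) *
        Real.cosh (t j) ^ ((-2 : ℝ) * (2 * ν - (1 + ι + b + a * ((r : ℝ) - 1)))) := by
    intro j
    have h2e : ∀ e : ℝ, (2:ℝ) ^ e = Real.exp (Real.log 2 * e) := fun e =>
      Real.rpow_def_of_pos (by norm_num) e
    have hce : ∀ e : ℝ, Real.cosh (t j) ^ e = Real.exp (Real.log (Real.cosh (t j)) * e) := fun e =>
      Real.rpow_def_of_pos (hc j) e
    simp only [h2e, hce, mul_pow, ← Real.exp_nat_mul, ← Real.exp_add]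
    rw [Real.exp_eq_exp]
    push_cast [hrr]
    ring
  calc (∏ j, (Real.cosh (t j) ^ (-2 * ν)) ^ 2) * Q ^ 2 *
        ((∏ j, (2:ℝ) ^ (2 * b) * ((2:ℝ) ^ ι * (2:ℝ) ^ ι) *
            (Real.cosh (t j) ^ (2 * b) * (Real.cosh (t j) ^ ι * Real.cosh (t j) ^ ι))) *
          (∏ j, |Real.tanh (t j)| ^ (2 * b) * |Real.tanh (t j)| ^ ι) *
          ((∏ j, ((2:ℝ) ^ a * (Real.cosh (t j) ^ a * Real.cosh (t j) ^ a)) ^ (r - 1)) *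
            ∏ p ∈ Finset.univ.filter fun p : Fin r × Fin r => p.1 < p.2,
              |Real.tanh (t p.1) ^ 2 - Real.tanh (t p.2) ^ 2| ^ a))
      = (∏ j, (Real.cosh (t j) ^ (-2 * ν)) ^ 2 *
            ((2:ℝ) ^ (2 * b) * ((2:ℝ) ^ ι * (2:ℝ) ^ ι) *
              (Real.cosh (t j) ^ (2 * b) * (Real.cosh (t j) ^ ι * Real.cosh (t j) ^ ι))) *
            ((2:ℝ) ^ a * (Real.cosh (t j) ^ a * Real.cosh (t j) ^ a)) ^ (r - 1)) *
          ((∏ j, |Real.tanh (t j)| ^ (2 * b) * |Real.tanh (t j)| ^ ι) *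
            (Q ^ 2 * ∏ p ∈ Finset.univ.filter fun p : Fin r × Fin r => p.1 < p.2,
              |Real.tanh (t p.1) ^ 2 - Real.tanh (t p.2) ^ 2| ^ a)) := by
        rw [← hsplit (fun j => (Real.cosh (t j) ^ (-2 * ν)) ^ 2)
          (fun j => (2:ℝ) ^ (2 * b) * ((2:ℝ) ^ ι * (2:ℝ) ^ ι) *
            (Real.cosh (t j) ^ (2 * b) * (Real.cosh (t j) ^ ι * Real.cosh (t j) ^ ι)))
          (fun j => ((2:ℝ) ^ a * (Real.cosh (t j) ^ a * Real.cosh (t j) ^ a)) ^ (r - 1))]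
        ring
    _ = (∏ j, (2:ℝ) ^ (2 * ι + 2 * b + a * ((r : ℝ) - 1)) * Real.cosh (t j) ^ (-2 : ℝ) *
            Real.cosh (t j) ^ ((-2 : ℝ) * (2 * ν - (1 + ι + b + a * ((r : ℝ) - 1))))) *
          ((∏ j, |Real.tanh (t j)| ^ (2 * b) * |Real.tanh (t j)| ^ ι) *
            (Q ^ 2 * ∏ p ∈ Finset.univ.filter fun p : Fin r × Fin r => p.1 < p.2,
              |Real.tanh (t p.1) ^ 2 - Real.tanh (t p.2) ^ 2| ^ a)) := by
        rw [Finset.prod_congr rfl (fun j _ => key j)]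
    _ = (∏ _j : Fin r, (2:ℝ) ^ (2 * ι + 2 * b + a * ((r : ℝ) - 1))) *
          ((∏ j, Real.cosh (t j) ^ (-2 : ℝ)) *
            (Q ^ 2 *
              ((∏ p ∈ Finset.univ.filter fun p : Fin r × Fin r => p.1 < p.2,
                  |Real.tanh (t p.1) ^ 2 - Real.tanh (t p.2) ^ 2| ^ a) *
                (∏ j, |Real.tanh (t j)| ^ (2 * b) * |Real.tanh (t j)| ^ ι) *
                ∏ j, Real.cosh (t j) ^ ((-2 : ℝ) * (2 * ν - (1 + ι + b + a * ((r : ℝ) - 1))))))) := by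
        rw [← hsplit (fun j => (2:ℝ) ^ (2 * ι + 2 * b + a * ((r : ℝ) - 1)))
          (fun j => Real.cosh (t j) ^ (-2 : ℝ))
          (fun j => Real.cosh (t j) ^ ((-2 : ℝ) * (2 * ν - (1 + ι + b + a * ((r : ℝ) - 1)))))]
        ring

end NormTransferAux

theorem norm_transfer_change_of_variables (r : ℕ) (a ι b ν : ℝ)
    (ha : 0 < a) (hι : 0 < ι) (hb : 0 < b)
    (hν : ι + b + a * ((r : ℝ) - 1) < ν)
    (P : (Fin r → ℝ) → ℝ) (hP : Continuous P)
    (hsymm : ∀ (σ : Equiv.Perm (Fin r)) (x : Fin r → ℝ), P (x ∘ σ) = P x) :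
    ∫ t : Fin r → ℝ,
        ((∏ j, Real.cosh (t j) ^ (-2 * ν)) * P fun j => Real.tanh (t j)) ^ 2 *
          ((∏ j, |2 * Real.sinh (t j)| ^ (2 * b) * |2 * Real.sinh (2 * t j)| ^ ι) *
            ∏ p ∈ Finset.univ.filter fun p : Fin r × Fin r => p.1 < p.2,
              |2 * Real.sinh (t p.1 - t p.2)| ^ a * |2 * Real.sinh (t p.1 + t p.2)| ^ a)
      = 2 ^ ((2 * ι + 2 * b + a * ((r : ℝ) - 1)) * r) *
          ∫ x in Set.univ.pi fun _ : Fin r => Set.Icc (-1 : ℝ) 1,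
            P x ^ 2 *
              ((∏ p ∈ Finset.univ.filter fun p : Fin r × Fin r => p.1 < p.2,
                  |x p.1 ^ 2 - x p.2 ^ 2| ^ a) *
                (∏ j, |x j| ^ (2 * b + ι)) *
                ∏ j, (1 - x j ^ 2) ^ (2 * ν - (1 + ι + b + a * ((r : ℝ) - 1)))) := by
  rcases Nat.eq_zero_or_pos r with rfl | hr
  · have huniv : (Set.univ.pi fun _ : Fin 0 => Set.Icc (-1 : ℝ) 1) = Set.univ := by
      ext y
      simp
    have hfun : ∀ t : Fin 0 → ℝ, (fun j : Fin 0 => Real.tanh (t j)) = t := fun t =>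
      funext fun j => j.elim0
    simp [huniv, hfun]
  · rw [my_cov (fun x => P x ^ 2 *
      ((∏ p ∈ Finset.univ.filter fun p : Fin r × Fin r => p.1 < p.2,
          |x p.1 ^ 2 - x p.2 ^ 2| ^ a) *
        (∏ j, |x j| ^ (2 * b + ι)) *
        ∏ j, (1 - x j ^ 2) ^ (2 * ν - (1 + ι + b + a * ((r : ℝ) - 1)))))]
    rw [← MeasureTheory.integral_const_mul]
    exact MeasureTheory.integral_congr_ae (Filter.Eventually.of_forall fun t => by
      simpa using my_pointwise hr a ι b ν ha hι hb (P fun j => Real.tanh (t j)) t)
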